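/- Let R be a unital ring and M, N R-bimodules. There is an isomorphism of T_R(M)-bimodules between the degree-one-in-N part of T_R(M ⊕ N) (the direct sum of all tensor words in M and N containing exactly one N-factor) and T_R(M) ⊗_R N ⊗_R T_R(M). -/

import Mathlib

open TensorProduct

/-- The inclusion `T_R(M) → T_R(M ⊕ N)` induced by `M → M ⊕ N`. -/
noncomputable def inclTensorAlg (R M N : Type*) [CommRing R]
    [AddCommGroup M] [Module R M] [AddCommGroup N] [Module R N] :
    TensorAlgebra R M →ₐ[R] TensorAlgebra R (M × N) :=
  TensorAlgebra.lift R ((TensorAlgebra.ι R).comp (LinearMap.inl R M N))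

section Aux

variable {R M N : Type*} [CommRing R]
    [AddCommGroup M] [Module R M] [AddCommGroup N] [Module R N]

local notation "A" => TensorAlgebra R M
local notation "T" => TensorAlgebra R (M × N)
local notation "P" => (TensorAlgebra R M ⊗[R] N) ⊗[R] TensorAlgebra R M

/-- The trilinear multiplication map, curried. -/
noncomputable def muAux : A →ₗ[R] N →ₗ[R] A →ₗ[R] T :=
  LinearMap.mk₂ R
    (fun a n => (LinearMap.mulLeft R
        (inclTensorAlg R M N a * TensorAlgebra.ι R ((0 : M), n))).comp
        (inclTensorAlg R M N).toLinearMap)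
    (fun a a' n => by
      ext b
      simp [map_add, add_mul, mul_assoc])
    (fun r a n => by
      ext b
      simp [map_smul, smul_mul_assoc, mul_assoc])
    (fun a n n' => by
      ext b
      have : TensorAlgebra.ι R (((0 : M), n + n')) =
          TensorAlgebra.ι R ((0 : M), n) + TensorAlgebra.ι R ((0 : M), n') := by
        rw [← map_add]; norm_num
      simp [this, mul_add, add_mul, mul_assoc])
    (fun r a n => by
      ext b
      have : TensorAlgebra.ι R (((0 : M), r • n)) =
          r • TensorAlgebra.ι R ((0 : M), n) := by
        rw [← map_smul]; norm_num
      simp [this, mul_smul_comm, smul_mul_assoc, mul_assoc])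

noncomputable def muMap : P →ₗ[R] T :=
  TensorProduct.lift (TensorProduct.lift muAux)

@[simp] theorem muMap_tmul (a b : A) (n : N) :
    muMap ((a ⊗ₜ[R] n) ⊗ₜ[R] b) =
      inclTensorAlg R M N a * TensorAlgebra.ι R ((0 : M), n) * inclTensorAlg R M N b := rfl

/-- The linear map `(M × N) → End_R(A × P)` used to build the retraction. -/
noncomputable def psiAux : (M × N) →ₗ[R] Module.End R (A × P) where
  toFun p := LinearMap.prod
    ((LinearMap.mulLeft R (TensorAlgebra.ι R p.1)).comp (LinearMap.fst R A P))
    (((TensorProduct.mk R (A ⊗[R] N) A ((1 : A) ⊗ₜ[R] p.2)).comp (LinearMap.fst R A P)) +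
      ((DistribSMul.toLinearMap R P (TensorAlgebra.ι R p.1)).comp (LinearMap.snd R A P)))
  map_add' p q := by
    apply LinearMap.ext
    rintro ⟨x, u⟩
    refine Prod.ext ?_ ?_ <;>
      simp [Prod.fst_add, Prod.snd_add, map_add, add_mul, add_smul, TensorProduct.tmul_add,
        TensorProduct.add_tmul]
    abel
  map_smul' r p := by
    apply LinearMap.ext
    rintro ⟨x, u⟩
    refine Prod.ext ?_ ?_ <;>
      simp [Prod.smul_fst, Prod.smul_snd, map_smul, smul_mul_assoc, TensorProduct.tmul_smul,
        smul_smul, smul_add]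

noncomputable def phiMap : T →ₐ[R] Module.End R (A × P) :=
  TensorAlgebra.lift R psiAux

theorem phiMap_incl (a : A) (x : A) (u : P) :
    phiMap (inclTensorAlg R M N a) (x, u) = (a * x, a • u) := by
  induction a using TensorAlgebra.induction generalizing x u with
  | algebraMap r =>
      simp only [AlgHom.commutes, Algebra.algebraMap_eq_smul_one, map_smul, map_one]
      simp [Prod.smul_mk, smul_mul_assoc, smul_assoc]
  | ι m =>
      simp only [inclTensorAlg, TensorAlgebra.lift_ι_apply, LinearMap.coe_comp,
        Function.comp_apply, LinearMap.inl_apply]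
      rw [phiMap, TensorAlgebra.lift_ι_apply]
      simp [psiAux, TensorProduct.zero_tmul]
  | mul a b ha hb =>
      simp only [map_mul]
      rw [Module.End.mul_apply, hb, ha, mul_assoc, mul_smul]
  | add a b ha hb =>
      simp only [map_add, LinearMap.add_apply, ha, hb, Prod.mk_add_mk, add_mul, add_smul]

theorem phi_mu (z : P) :
    (phiMap (muMap (R := R) (M := M) (N := N) z) ((1 : A), (0 : P))).2 = z := by
  induction z using TensorProduct.induction_on with
  | zero => simp
  | tmul p b =>
      induction p using TensorProduct.induction_on with
      | zero => simp [TensorProduct.zero_tmul]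
      | tmul a n =>
          rw [muMap_tmul, map_mul, map_mul, Module.End.mul_apply, Module.End.mul_apply,
            phiMap_incl b 1 0]
          have h0 : phiMap (TensorAlgebra.ι R ((0 : M), n)) (b * 1, b • (0 : P)) =
              ((0 : A), ((1 : A) ⊗ₜ[R] n) ⊗ₜ[R] (b * 1)) := by
            rw [phiMap, TensorAlgebra.lift_ι_apply]
            simp [psiAux]
          rw [h0, phiMap_incl a 0 _]
          simp [TensorProduct.smul_tmul', smul_eq_mul]
      | add p q hp hq =>
          rw [TensorProduct.add_tmul, map_add, map_add, LinearMap.add_apply, Prod.snd_add, hp, hq]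
  | add z w hz hw =>
      rw [map_add, map_add, LinearMap.add_apply, Prod.snd_add, hz, hw]

end Aux

/-- For `R` a unital ring and `M`, `N` `R`-bimodules, the degree-one-in-`N` part of
`T_R(M ⊕ N)` (the span of all tensor words with exactly one `N`-factor, i.e. of the
elements `a·n·b` with `a, b ∈ T_R(M)`, `n ∈ N`) is isomorphic, compatibly with the
`T_R(M)`-bimodule structures (concatenation on the left and right), to
`T_R(M) ⊗_R N ⊗_R T_R(M)`: the multiplication map
`μ : (T_R(M) ⊗ N) ⊗ T_R(M) → T_R(M ⊕ N)`, `a ⊗ n ⊗ b ↦ a·n·b`, is injective with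
range the degree-one part. -/
theorem stmt15 {R M N : Type*} [CommRing R]
    [AddCommGroup M] [Module R M] [AddCommGroup N] [Module R N] :
    ∃ μ : (TensorAlgebra R M ⊗[R] N) ⊗[R] TensorAlgebra R M →ₗ[R] TensorAlgebra R (M × N),
      (∀ (a b : TensorAlgebra R M) (n : N),
        μ ((a ⊗ₜ[R] n) ⊗ₜ[R] b) =
          inclTensorAlg R M N a * TensorAlgebra.ι R ((0 : M), n) * inclTensorAlg R M N b) ∧
      Function.Injective μ ∧
      LinearMap.range μ = Submodule.span R {x : TensorAlgebra R (M × N) |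
        ∃ (a b : TensorAlgebra R M) (n : N),
          x = inclTensorAlg R M N a * TensorAlgebra.ι R ((0 : M), n) * inclTensorAlg R M N b} ∧
      -- compatibility with the `T_R(M)`-bimodule structures
      (∀ (t a b : TensorAlgebra R M) (n : N),
        μ (((t * a) ⊗ₜ[R] n) ⊗ₜ[R] b) = inclTensorAlg R M N t * μ ((a ⊗ₜ[R] n) ⊗ₜ[R] b) ∧
        μ ((a ⊗ₜ[R] n) ⊗ₜ[R] (b * t)) = μ ((a ⊗ₜ[R] n) ⊗ₜ[R] b) * inclTensorAlg R M N t) := by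
  refine ⟨muMap, fun a b n => muMap_tmul a b n, ?_, ?_, ?_⟩
  · -- injectivity via the retraction
    intro z w h
    have := phi_mu (R := R) (M := M) (N := N) z
    rw [h, phi_mu] at this
    exact this.symm
  · -- range
    apply le_antisymm
    · rintro x ⟨z, rfl⟩
      induction z using TensorProduct.induction_on with
      | zero => simp
      | tmul p b =>
          induction p using TensorProduct.induction_on with
          | zero => simp [TensorProduct.zero_tmul]
          | tmul a n =>
              exact Submodule.subset_span ⟨a, b, n, (muMap_tmul a b n).symm⟩
          | add p q hp hq =>
              rw [TensorProduct.add_tmul, map_add]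
              exact Submodule.add_mem _ hp hq
      | add z w hz hw =>
          rw [map_add]
          exact Submodule.add_mem _ hz hw
    · rw [Submodule.span_le]
      rintro x ⟨a, b, n, rfl⟩
      exact ⟨(a ⊗ₜ[R] n) ⊗ₜ[R] b, muMap_tmul a b n⟩
  · -- bimodule compatibility
    intro t a b n
    constructor
    · rw [muMap_tmul, muMap_tmul, map_mul]
      noncomm_ring
    · rw [muMap_tmul, muMap_tmul, map_mul]
      noncomm_ring
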